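/- If a node v in the Boolean iteration system has steady-state value zero under every instantiation of the external inputs, then removing v and all its incident edges does not change the steady-state value of any other node: for every other node u and every instantiation of external inputs, the steady-state value of u in the reduced system equals its steady-state value in the original system. -/
import Mathlib


/-- If a node `v0` of the Boolean iteration system has steady-state value zero
under every instantiation of the external inputs, then removing `v0` (treating
it as a constant 0 input to its former children) does not change the
steady-state value of any other node. -/
theorem type_one_node_elimination (V : Type*) [Fintype V] [DecidableEq V]
    (E : V → V → Prop) [DecidableRel E] (isAnd : V → Bool)
    (val val' : (V → Bool) → ℕ → V → Bool)
    (h0 : ∀ inp v, val inp 0 v = false)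
    (hs : ∀ inp k v, val inp (k + 1) v =
      (inp v && if isAnd v = true then decide (∀ u, E u v → val inp k u = true)
                else decide (∃ u, E u v ∧ val inp k u = true)))
    (v0 : V)
    (hdead : ∀ inp, val inp (Fintype.card V) v0 = false)
    (h0' : ∀ inp v, val' inp 0 v = false)
    (hs' : ∀ inp k v, val' inp (k + 1) v =
      if v = v0 then false else
      (inp v && if isAnd v = true then
                  decide (∀ u, E u v → (u ≠ v0 ∧ val' inp k u = true))
                else decide (∃ u, E u v ∧ u ≠ v0 ∧ val' inp k u = true))) :
    ∀ inp : V → Bool, ∀ u : V, u ≠ v0 →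
      val' inp (Fintype.card V) u = val inp (Fintype.card V) u := by
  intro inp
  -- monotonicity of `val` in time
  have mono : ∀ k v, val inp k v = true → val inp (k + 1) v = true := by
    intro k
    induction k with
    | zero => intro v h; rw [h0] at h; exact absurd h (by simp)
    | succ k ih =>
      intro v h
      rw [hs] at h ⊢
      rw [Bool.and_eq_true] at h ⊢
      refine ⟨h.1, ?_⟩
      by_cases ha : isAnd v = true
      · rw [if_pos ha] at h; rw [if_pos ha]; simp only [decide_eq_true_eq] at h ⊢
        exact fun w hw => ih w (h.2 w hw)
      · rw [if_neg ha] at h; rw [if_neg ha]; simp only [decide_eq_true_eq] at h ⊢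
        obtain ⟨w, hw, hv⟩ := h.2
        exact ⟨w, hw, ih w hv⟩
  have chain : ∀ k m, k ≤ m → ∀ v, val inp k v = true → val inp m v = true := by
    intro k m hkm
    induction hkm with
    | refl => exact fun v h => h
    | step _ ih => exact fun v h => mono _ v (ih v h)
  have dead : ∀ k, k ≤ Fintype.card V → val inp k v0 = false := by
    intro k hk
    by_contra h
    have := chain k _ hk v0 (by simpa using h)
    rw [hdead inp] at this
    exact absurd this (by simp)
  have main : ∀ k, k ≤ Fintype.card V → ∀ u, u ≠ v0 →
      val' inp k u = val inp k u := by
    intro k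
    induction k with
    | zero => intro _ u _; rw [h0', h0]
    | succ k ih =>
      intro hk u hu
      have hk' : k ≤ Fintype.card V := Nat.le_of_succ_le hk
      rw [hs', hs, if_neg hu]
      congr 1
      by_cases ha : isAnd u = true
      · rw [if_pos ha, if_pos ha, decide_eq_decide]
        constructor
        · intro h w hw
          obtain ⟨hw0, hv⟩ := h w hw
          rw [← ih hk' w hw0]; exact hv
        · intro h w hw
          have hw0 : w ≠ v0 := by
            rintro rfl
            have := h w hw
            rw [dead k hk'] at this
            exact absurd this (by simp)
          exact ⟨hw0, by rw [ih hk' w hw0]; exact h w hw⟩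
      · rw [if_neg ha, if_neg ha, decide_eq_decide]
        constructor
        · rintro ⟨w, hw, hw0, hv⟩
          exact ⟨w, hw, by rw [← ih hk' w hw0]; exact hv⟩
        · rintro ⟨w, hw, hv⟩
          have hw0 : w ≠ v0 := by
            rintro rfl
            rw [dead k hk'] at hv
            exact absurd hv (by simp)
          exact ⟨w, hw, hw0, by rw [ih hk' w hw0]; exact hv⟩
  exact main _ le_rfl
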